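/- Let a,b ∈ ℝ with a² - b² ≠ 1 and W ⊂ ℝ⁴ the plane spanned by u₁ = (1,0,0,0) and u₂ = (0,a,b,1). With J₁(x₁,x₂,x₃,x₄) = (x₃,x₄,x₁,x₂) and g₁ = diag(1,1,-1,-1), the tangential endomorphism P of J₁ on W satisfies P² = (b²/(1-a²+b²))·Id on W. -/
import Mathlib


def J1 (v : Fin 4 → ℝ) : Fin 4 → ℝ := ![v 2, v 3, v 0, v 1]

def g1 (v w : Fin 4 → ℝ) : ℝ := v 0 * w 0 + v 1 * w 1 - v 2 * w 2 - v 3 * w 3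

lemma key (a b x y c d : ℝ) (hD : a ^ 2 - b ^ 2 - 1 ≠ 0)
    (h1 : g1 (J1 (x • ![(1:ℝ), 0, 0, 0] + y • ![0, a, b, 1])
        - (c • ![(1:ℝ), 0, 0, 0] + d • ![0, a, b, 1])) ![(1:ℝ), 0, 0, 0] = 0)
    (h2 : g1 (J1 (x • ![(1:ℝ), 0, 0, 0] + y • ![0, a, b, 1])
        - (c • ![(1:ℝ), 0, 0, 0] + d • ![0, a, b, 1])) ![0, a, b, 1] = 0) :
    c = y * b ∧ d = -x * b / (a ^ 2 - b ^ 2 - 1) := by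
  simp only [g1, J1, Pi.add_apply, Pi.sub_apply, Pi.smul_apply, Matrix.cons_val_zero,
    Matrix.cons_val_one, Matrix.head_cons, Matrix.cons_val_two, Matrix.tail_cons,
    Matrix.cons_val_three, smul_eq_mul] at h1 h2
  constructor
  · nlinarith [h1]
  · field_simp
    nlinarith [h2]

theorem stmt_16 (a b : ℝ) (hab : a ^ 2 - b ^ 2 ≠ 1) (W : Submodule ℝ (Fin 4 → ℝ))
    (hW : W = Submodule.span ℝ {![1, 0, 0, 0], ![0, a, b, 1]})
    (P : (Fin 4 → ℝ) → (Fin 4 → ℝ))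
    (hPW : ∀ u ∈ W, P u ∈ W)
    (horth : ∀ u ∈ W, ∀ w ∈ W, g1 (J1 u - P u) w = 0) :
    ∀ u ∈ W, P (P u) = (b ^ 2 / (1 - a ^ 2 + b ^ 2)) • u := by
  have hD : a ^ 2 - b ^ 2 - 1 ≠ 0 := sub_ne_zero.mpr hab
  set e1 : Fin 4 → ℝ := ![1, 0, 0, 0]
  set e2 : Fin 4 → ℝ := ![0, a, b, 1]
  have he1 : e1 ∈ W := by
    rw [hW]; exact Submodule.subset_span (by simp)
  have he2 : e2 ∈ W := by
    rw [hW]; exact Submodule.subset_span (by simp)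
  have hmem : ∀ u ∈ W, ∃ x y : ℝ, u = x • e1 + y • e2 := by
    intro u hu
    rw [hW, show ({![1, 0, 0, 0], ![0, a, b, 1]} : Set (Fin 4 → ℝ)) = {e1, e2} from rfl,
      Submodule.mem_span_pair] at hu
    obtain ⟨x, y, h⟩ := hu
    exact ⟨x, y, h.symm⟩
  -- formula for P on elements written in coordinates
  have hP : ∀ x y : ℝ, P (x • e1 + y • e2)
      = (y * b) • e1 + (-x * b / (a ^ 2 - b ^ 2 - 1)) • e2 := by
    intro x y
    have huW : x • e1 + y • e2 ∈ W := W.add_mem (W.smul_mem _ he1) (W.smul_mem _ he2)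
    obtain ⟨c, d, hcd⟩ := hmem _ (hPW _ huW)
    have h1 := horth _ huW _ he1
    have h2 := horth _ huW _ he2
    rw [hcd] at h1 h2
    obtain ⟨hc, hd⟩ := key a b x y c d hD h1 h2
    rw [hcd, hc, hd]
  intro u hu
  obtain ⟨x, y, rfl⟩ := hmem u hu
  rw [hP, hP]
  funext i
  have hD' : 1 - a ^ 2 + b ^ 2 ≠ 0 := by intro h; apply hD; linarith
  fin_cases i <;>
    simp [e1, e2, smul_eq_mul] <;> field_simp <;> ring
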